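/- Let p, q ≥ 1 and set n = 1 + p + q. Suppose D_F = [[0, a^T],[c, D_{F,x_0}]] ((1+p)×(1+p)) and D_H = [[0, b^T],[d, D_{H,x_0}]] ((1+q)×(1+q)), and define D = [[0, a^T, b^T],[c, D_{F,x_0}, c j^T + j b^T],[d, d j^T + j a^T, D_{H,x_0}]]. Suppose L_F = [[φ, f^T],[h, L_{F,x_0}]] and L_H = [[τ, g^T],[k, L_{H,x_0}]] satisfy L_F j = 0, L_H j = 0, L_F D_F + I = β_F j^T, and L_H D_H + I = β_H j^T for some vectors β_F, β_H. Define L = [[φ+τ, f^T, g^T],[h, L_{F,x_0}, 0],[k, 0, L_{H,x_0}]] and β with β_{x_0} = (β_F)_{x_0} + (β_H)_{x_0} - 1 and the remaining entries taken from β_F and β_H respectively. Then L j = 0 and L D + I = β j^T. -/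
import Mathlib


open Matrix

theorem stmt_17 {p q : ℕ} (hp : 1 ≤ p) (hq : 1 ≤ q)
    (a c : Fin p → ℝ) (b d : Fin q → ℝ)
    (DF0 : Matrix (Fin p) (Fin p) ℝ) (DH0 : Matrix (Fin q) (Fin q) ℝ)
    (DF : Matrix (Unit ⊕ Fin p) (Unit ⊕ Fin p) ℝ)
    (hDF : DF = Matrix.of fun u v =>
      match u, v with
      | Sum.inl _, Sum.inl _ => 0
      | Sum.inl _, Sum.inr j => a j
      | Sum.inr i, Sum.inl _ => c i
      | Sum.inr i, Sum.inr j => DF0 i j)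
    (DH : Matrix (Unit ⊕ Fin q) (Unit ⊕ Fin q) ℝ)
    (hDH : DH = Matrix.of fun u v =>
      match u, v with
      | Sum.inl _, Sum.inl _ => 0
      | Sum.inl _, Sum.inr j => b j
      | Sum.inr i, Sum.inl _ => d i
      | Sum.inr i, Sum.inr j => DH0 i j)
    (D : Matrix (Unit ⊕ Fin p ⊕ Fin q) (Unit ⊕ Fin p ⊕ Fin q) ℝ)
    (hD : D = Matrix.of fun u v =>
      match u, v with
      | Sum.inl _, Sum.inl _ => 0
      | Sum.inl _, Sum.inr (Sum.inl j) => a j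
      | Sum.inl _, Sum.inr (Sum.inr j) => b j
      | Sum.inr (Sum.inl i), Sum.inl _ => c i
      | Sum.inr (Sum.inl i), Sum.inr (Sum.inl j) => DF0 i j
      | Sum.inr (Sum.inl i), Sum.inr (Sum.inr j) => c i + b j
      | Sum.inr (Sum.inr i), Sum.inl _ => d i
      | Sum.inr (Sum.inr i), Sum.inr (Sum.inl j) => d i + a j
      | Sum.inr (Sum.inr i), Sum.inr (Sum.inr j) => DH0 i j)
    (φ τ : ℝ) (f h : Fin p → ℝ) (g k : Fin q → ℝ)
    (LF0 : Matrix (Fin p) (Fin p) ℝ) (LH0 : Matrix (Fin q) (Fin q) ℝ)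
    (LF : Matrix (Unit ⊕ Fin p) (Unit ⊕ Fin p) ℝ)
    (hLF : LF = Matrix.of fun u v =>
      match u, v with
      | Sum.inl _, Sum.inl _ => φ
      | Sum.inl _, Sum.inr j => f j
      | Sum.inr i, Sum.inl _ => h i
      | Sum.inr i, Sum.inr j => LF0 i j)
    (LH : Matrix (Unit ⊕ Fin q) (Unit ⊕ Fin q) ℝ)
    (hLH : LH = Matrix.of fun u v =>
      match u, v with
      | Sum.inl _, Sum.inl _ => τ
      | Sum.inl _, Sum.inr j => g j
      | Sum.inr i, Sum.inl _ => k i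
      | Sum.inr i, Sum.inr j => LH0 i j)
    (βF : Unit ⊕ Fin p → ℝ) (βH : Unit ⊕ Fin q → ℝ)
    (hLFj : LF.mulVec (fun _ => 1) = 0)
    (hLHj : LH.mulVec (fun _ => 1) = 0)
    (hLFD : LF * DF + 1 = vecMulVec βF (fun _ => 1))
    (hLHD : LH * DH + 1 = vecMulVec βH (fun _ => 1))
    (L : Matrix (Unit ⊕ Fin p ⊕ Fin q) (Unit ⊕ Fin p ⊕ Fin q) ℝ)
    (hL : L = Matrix.of fun u v =>
      match u, v with
      | Sum.inl _, Sum.inl _ => φ + τ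
      | Sum.inl _, Sum.inr (Sum.inl j) => f j
      | Sum.inl _, Sum.inr (Sum.inr j) => g j
      | Sum.inr (Sum.inl i), Sum.inl _ => h i
      | Sum.inr (Sum.inl i), Sum.inr (Sum.inl j) => LF0 i j
      | Sum.inr (Sum.inl _), Sum.inr (Sum.inr _) => 0
      | Sum.inr (Sum.inr i), Sum.inl _ => k i
      | Sum.inr (Sum.inr _), Sum.inr (Sum.inl _) => 0
      | Sum.inr (Sum.inr i), Sum.inr (Sum.inr j) => LH0 i j)
    (β : Unit ⊕ Fin p ⊕ Fin q → ℝ)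
    (hβ : β = fun u =>
      match u with
      | Sum.inl _ => βF (Sum.inl ()) + βH (Sum.inl ()) - 1
      | Sum.inr (Sum.inl i) => βF (Sum.inr i)
      | Sum.inr (Sum.inr i) => βH (Sum.inr i)) :
    L.mulVec (fun _ => 1) = 0 ∧ L * D + 1 = vecMulVec β (fun _ => 1) := by

  subst hDF hDH hD hLF hLH hL hβ
  have hFj0 : φ + ∑ j, f j = 0 := by
    simpa [Matrix.mulVec, dotProduct, Fintype.sum_sum_type] using congrFun hLFj (Sum.inl ())
  have hFj1 : ∀ i, h i + ∑ j, LF0 i j = 0 := fun i => by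
    simpa [Matrix.mulVec, dotProduct, Fintype.sum_sum_type] using congrFun hLFj (Sum.inr i)
  have hHj0 : τ + ∑ j, g j = 0 := by
    simpa [Matrix.mulVec, dotProduct, Fintype.sum_sum_type] using congrFun hLHj (Sum.inl ())
  have hHj1 : ∀ i, k i + ∑ j, LH0 i j = 0 := fun i => by
    simpa [Matrix.mulVec, dotProduct, Fintype.sum_sum_type] using congrFun hLHj (Sum.inr i)
  have hF00 : (∑ j, f j * c j) + 1 = βF (Sum.inl ()) := by
    simpa [Matrix.mul_apply, Matrix.add_apply, Matrix.one_apply, vecMulVec_apply,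
      Fintype.sum_sum_type] using congrFun (congrFun hLFD (Sum.inl ())) (Sum.inl ())
  have hF01 : ∀ j, φ * a j + ∑ l, f l * DF0 l j = βF (Sum.inl ()) := fun j => by
    simpa [Matrix.mul_apply, Matrix.add_apply, Matrix.one_apply, vecMulVec_apply,
      Fintype.sum_sum_type] using congrFun (congrFun hLFD (Sum.inl ())) (Sum.inr j)
  have hF10 : ∀ i, (∑ l, LF0 i l * c l) = βF (Sum.inr i) := fun i => by
    simpa [Matrix.mul_apply, Matrix.add_apply, Matrix.one_apply, vecMulVec_apply,
      Fintype.sum_sum_type] using congrFun (congrFun hLFD (Sum.inr i)) (Sum.inl ())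
  have hF11 : ∀ i j, h i * a j + (∑ l, LF0 i l * DF0 l j) + (if i = j then (1:ℝ) else 0)
      = βF (Sum.inr i) := fun i j => by
    have := congrFun (congrFun hLFD (Sum.inr i)) (Sum.inr j)
    simpa [Matrix.mul_apply, Matrix.add_apply, Matrix.one_apply, vecMulVec_apply,
      Fintype.sum_sum_type, add_assoc] using this
  have hH00 : (∑ j, g j * d j) + 1 = βH (Sum.inl ()) := by
    simpa [Matrix.mul_apply, Matrix.add_apply, Matrix.one_apply, vecMulVec_apply,
      Fintype.sum_sum_type] using congrFun (congrFun hLHD (Sum.inl ())) (Sum.inl ())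
  have hH01 : ∀ j, τ * b j + ∑ l, g l * DH0 l j = βH (Sum.inl ()) := fun j => by
    simpa [Matrix.mul_apply, Matrix.add_apply, Matrix.one_apply, vecMulVec_apply,
      Fintype.sum_sum_type] using congrFun (congrFun hLHD (Sum.inl ())) (Sum.inr j)
  have hH10 : ∀ i, (∑ l, LH0 i l * d l) = βH (Sum.inr i) := fun i => by
    simpa [Matrix.mul_apply, Matrix.add_apply, Matrix.one_apply, vecMulVec_apply,
      Fintype.sum_sum_type] using congrFun (congrFun hLHD (Sum.inr i)) (Sum.inl ())
  have hH11 : ∀ i j, k i * b j + (∑ l, LH0 i l * DH0 l j) + (if i = j then (1:ℝ) else 0)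
      = βH (Sum.inr i) := fun i j => by
    have := congrFun (congrFun hLHD (Sum.inr i)) (Sum.inr j)
    simpa [Matrix.mul_apply, Matrix.add_apply, Matrix.one_apply, vecMulVec_apply,
      Fintype.sum_sum_type, add_assoc] using this
  constructor
  · funext u
    rcases u with _ | i | i <;>
      simp only [Matrix.mulVec, dotProduct, Fintype.sum_sum_type, Matrix.of_apply,
        Finset.sum_const, Finset.card_univ, Fintype.card_unit, one_smul, mul_one,
        Pi.zero_apply, smul_eq_mul, smul_zero, zero_mul, Finset.sum_const_zero, add_zero, zero_add]
    · linarith [hFj0, hHj0]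
    · linarith [hFj1 i]
    · linarith [hHj1 i]
  · ext u v
    rcases u with _ | i | i <;> rcases v with _ | j | j <;>
      simp only [Matrix.mul_apply, Matrix.add_apply, Matrix.one_apply, vecMulVec_apply,
        Fintype.sum_sum_type, Matrix.of_apply, Finset.sum_const, Finset.card_univ,
        Fintype.card_unit, one_smul, mul_add, mul_zero, mul_one, Finset.sum_add_distrib,
        ← Finset.sum_mul, reduceIte, Sum.inl.injEq, Sum.inr.injEq, reduceCtorEq,
        if_false, if_true, zero_mul, smul_zero, Finset.sum_const_zero, add_zero, zero_add]
    · linarith [hF00, hH00]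
    · have e : (τ + ∑ i, g i) * a j = 0 := by rw [hHj0]; ring
      linarith [hF01 j, hH00, e]
    · have e : (φ + ∑ i, f i) * b j = 0 := by rw [hFj0]; ring
      linarith [hH01 j, hF00, e]
    · linarith [hF10 i]
    · have := hF11 i j
      rcases eq_or_ne i j with rfl | hne <;> simp_all <;> linarith
    · have e : (h i + ∑ l, LF0 i l) * b j = 0 := by rw [hFj1 i]; ring
      linarith [hF10 i, e]
    · linarith [hH10 i]
    · have e : (k i + ∑ l, LH0 i l) * a j = 0 := by rw [hHj1 i]; ring
      linarith [hH10 i, e]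
    · have := hH11 i j
      rcases eq_or_ne i j with rfl | hne <;> simp_all <;> linarith
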